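/- Let n be an odd positive integer, let p_1, ..., p_n and q_1, ..., q_n each be n-tuples of distinct positive real numbers, and let r be a real number with r > n − 1. Then the n×n matrix whose (i,j) entry is (p_i^r + q_j^r)/(p_i + q_j) is nonsingular. In particular, for n odd and r > n − 1 the Kwong matrix K_r(p_1,...,p_n) is nonsingular. -/

import Mathlib

open Matrix

/-- The Kwong matrix: (i,j) entry is `(p i ^ r + p j ^ r) / (p i + p j)`. -/
noncomputable def kwong {n : ℕ} (p : Fin n → ℝ) (r : ℝ) : Matrix (Fin n) (Fin n) ℝ :=
  Matrix.of fun i j => (p i ^ r + p j ^ r) / (p i + p j)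

lemma kwong_isHermitian {n : ℕ} (p : Fin n → ℝ) (r : ℝ) : (kwong p r).IsHermitian := by
  ext i j
  simp only [kwong, Matrix.conjTranspose_apply, Matrix.of_apply, star_trivial]
  rw [add_comm (p j ^ r), add_comm (p j)]

/-- The inertia of a real symmetric matrix: the numbers of positive, zero and
negative eigenvalues, counted with multiplicity. -/
noncomputable def inertia {n : ℕ} (A : Matrix (Fin n) (Fin n) ℝ) (hA : A.IsHermitian) :
    ℕ × ℕ × ℕ :=
  ({i | 0 < hA.eigenvalues i}.ncard, {i | hA.eigenvalues i = 0}.ncard,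
    {i | hA.eigenvalues i < 0}.ncard)

/-! ### Auxiliary material

Strategy: if the matrix were singular, a nonzero null vector `v` produces a function
`g(t) = sign(t)|t|^r A(t) + B(t)` (`A`, `B` polynomials of degree `≤ n-1`, `A ≠ 0`)
vanishing at the `2n` distinct points `p i` and `-(q j)`.  Repeated Rolle-type
arguments (with a careful treatment of the possible bad point `t = 0`, where the
oddness of `n` makes the formulas on the two half-lines match up) reduce this to a
nonzero polynomial of degree `≤ n-1` having `n` distinct roots, a contradiction. -/

/-- Sign factor for the odd extension `t ↦ sign(t)|t|^r`. -/
noncomputable def sgnp (t : ℝ) : ℝ := if t < 0 then -1 else 1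

/-- The sequence of polynomials obtained from `A` by repeatedly applying
`P ↦ (r-k)•P + X*P'` (the polynomial part of differentiating `±|t|^(r-k) P(t)`). -/
noncomputable def Aseq (r : ℝ) (A : Polynomial ℝ) : ℕ → Polynomial ℝ
  | 0 => A
  | (k+1) => Polynomial.C (r - (k : ℝ)) * Aseq r A k
      + Polynomial.X * Polynomial.derivative (Aseq r A k)

/-- The successive derivatives of `t ↦ sign(t)|t|^r A(t) + B(t)`. -/
noncomputable def hfun (r : ℝ) (A B : Polynomial ℝ) (k : ℕ) (t : ℝ) : ℝ :=
  (if Even k then sgnp t else 1) * |t| ^ (r - (k : ℝ)) * (Aseq r A k).eval t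
    + ((⇑Polynomial.derivative)^[k] B).eval t

lemma continuous_abs_rpow (σ : ℝ) (hσ : 0 < σ) : Continuous fun t : ℝ => |t| ^ σ := by
  rw [continuous_iff_continuousAt]
  intro x
  exact (Real.continuousAt_rpow_const _ _ (Or.inr hσ.le)).comp continuous_abs.continuousAt

lemma continuous_sgnp_rpow (σ : ℝ) (hσ : 0 < σ) :
    Continuous fun t : ℝ => sgnp t * |t| ^ σ := by
  rw [continuous_iff_continuousAt]
  intro x
  rcases lt_trichotomy x 0 with hx | hx | hx
  · have heq : (fun t : ℝ => -1 * |t| ^ σ) =ᶠ[nhds x] fun t => sgnp t * |t| ^ σ := by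
      filter_upwards [Iio_mem_nhds hx] with t ht
      simp [sgnp, Set.mem_Iio.mp ht]
    exact ContinuousAt.congr (((continuous_abs_rpow σ hσ).continuousAt (x := x)).const_mul (-1)) heq
  · subst hx
    have h1 : Filter.Tendsto (fun t : ℝ => sgnp t * |t| ^ σ) (nhds 0) (nhds 0) := by
      apply squeeze_zero_norm (a := fun t : ℝ => |t| ^ σ)
      · intro t
        have h2 : ‖sgnp t‖ = 1 := by unfold sgnp; split <;> simp
        rw [norm_mul, h2, one_mul, Real.norm_eq_abs,
          abs_of_nonneg (Real.rpow_nonneg (abs_nonneg t) σ)]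
      · have := (continuous_abs_rpow σ hσ).continuousAt (x := 0)
        simpa [ContinuousAt, Real.zero_rpow hσ.ne'] using this
    simpa [ContinuousAt, sgnp, Real.zero_rpow hσ.ne'] using h1
  · have heq : (fun t : ℝ => 1 * |t| ^ σ) =ᶠ[nhds x] fun t => sgnp t * |t| ^ σ := by
      filter_upwards [Ioi_mem_nhds hx] with t ht
      simp [sgnp, not_lt.mpr (le_of_lt (Set.mem_Ioi.mp ht))]
    exact ContinuousAt.congr (((continuous_abs_rpow σ hσ).continuousAt (x := x)).const_mul 1) heq

lemma continuous_hfun (r : ℝ) (A B : Polynomial ℝ) (k : ℕ) (hk : 0 < r - (k : ℝ)) :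
    Continuous (hfun r A B k) := by
  unfold hfun
  apply Continuous.add _ (Polynomial.continuous _)
  apply Continuous.mul _ (Polynomial.continuous _)
  by_cases h : Even k
  · simpa [h] using continuous_sgnp_rpow _ hk
  · simpa [h] using continuous_abs_rpow _ hk

lemma hasDerivAt_hfun (r : ℝ) (A B : Polynomial ℝ) (k : ℕ) {t : ℝ} (ht : t ≠ 0) :
    HasDerivAt (hfun r A B k) (hfun r A B (k+1) t) t := by
  set σ := r - (k : ℝ) with hσdef
  have hcast : r - ((k+1 : ℕ) : ℝ) = σ - 1 := by push_cast; ring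
  set P := Aseq r A k with hP
  set Q := (⇑Polynomial.derivative)^[k] B with hQ
  have hQs : (⇑Polynomial.derivative)^[k+1] B = Polynomial.derivative Q := by
    rw [Function.iterate_succ_apply']
  have hAs : Aseq r A (k+1) = Polynomial.C σ * P + Polynomial.X * Polynomial.derivative P := rfl
  have hE1 : Even (k+1) ↔ ¬ Even k := Nat.even_add_one
  rcases ht.lt_or_gt with htn | htp
  · -- t < 0
    set ε : ℝ := if Even k then (-1:ℝ) else 1 with hε
    have hg : HasDerivAt (fun s : ℝ => ε * (-s) ^ σ * P.eval s + Q.eval s)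
        ((ε * (σ * (-t) ^ (σ - 1) * (-1))) * P.eval t
          + ε * (-t) ^ σ * (Polynomial.derivative P).eval t
          + (Polynomial.derivative Q).eval t) t := by
      have h1 : HasDerivAt (fun s : ℝ => (-s) ^ σ) (σ * (-t) ^ (σ - 1) * (-1)) t := by
        have h0 := (Real.hasDerivAt_rpow_const (x := -t) (p := σ)
          (Or.inl (by simpa using ht))).comp t (hasDerivAt_neg t)
        exact h0.congr_deriv (by ring)
      exact ((h1.const_mul ε).mul (P.hasDerivAt t)).add (Q.hasDerivAt t)
    have heq : (fun s : ℝ => ε * (-s) ^ σ * P.eval s + Q.eval s) =ᶠ[nhds t] hfun r A B k := by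
      filter_upwards [Iio_mem_nhds htn] with s hs
      have hs' : s < 0 := Set.mem_Iio.mp hs
      by_cases hEk : Even k <;>
        simp [hfun, ← hP, ← hQ, ← hσdef, abs_of_neg hs', sgnp, hs', hε, hEk]
    have hres := hg.congr_of_eventuallyEq heq.symm
    refine hres.congr_deriv ?_
    have hmt : (0:ℝ) < -t := by linarith
    have hrw : (-t) ^ σ = (-t) ^ (σ - 1) * (-t) := by
      rw [← Real.rpow_add_one (ne_of_gt hmt)]; ring_nf
    simp only [hfun, hcast, hQs, hAs, abs_of_neg htn, sgnp, if_pos htn,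
      Polynomial.eval_add, Polynomial.eval_mul, Polynomial.eval_C, Polynomial.eval_X]
    by_cases hEk : Even k <;>
      · simp only [hE1, hEk, if_true, if_false, not_true, not_false_iff, hε]
        rw [hrw]; ring
  · -- 0 < t
    have hg : HasDerivAt (fun s : ℝ => s ^ σ * P.eval s + Q.eval s)
        ((σ * t ^ (σ - 1)) * P.eval t + t ^ σ * (Polynomial.derivative P).eval t
          + (Polynomial.derivative Q).eval t) t := by
      exact ((Real.hasDerivAt_rpow_const (x := t) (p := σ) (Or.inl ht)).mul
        (P.hasDerivAt t)).add (Q.hasDerivAt t)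
    have heq : (fun s : ℝ => s ^ σ * P.eval s + Q.eval s) =ᶠ[nhds t] hfun r A B k := by
      filter_upwards [Ioi_mem_nhds htp] with s hs
      have hs' : (0:ℝ) < s := Set.mem_Ioi.mp hs
      by_cases hEk : Even k <;>
        simp [hfun, ← hP, ← hQ, ← hσdef, abs_of_pos hs', sgnp, not_lt.mpr hs'.le, hEk]
    have hres := hg.congr_of_eventuallyEq heq.symm
    refine hres.congr_deriv ?_
    have hrw : t ^ σ = t ^ (σ - 1) * t := by
      rw [← Real.rpow_add_one ht]; ring_nf
    simp only [hfun, hcast, hQs, hAs, abs_of_pos htp, sgnp, if_neg (not_lt.mpr htp.le),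
      Polynomial.eval_add, Polynomial.eval_mul, Polynomial.eval_C, Polynomial.eval_X]
    by_cases hEk : Even k <;>
      · simp only [hE1, hEk, if_true, if_false, not_true, not_false_iff]
        rw [hrw]; ring

lemma natDegree_Aseq_le (r : ℝ) (A : Polynomial ℝ) (k : ℕ) :
    (Aseq r A k).natDegree ≤ A.natDegree := by
  induction k with
  | zero => exact le_refl _
  | succ k ih =>
    show (Polynomial.C (r - (k : ℝ)) * Aseq r A k
      + Polynomial.X * Polynomial.derivative (Aseq r A k)).natDegree ≤ A.natDegree
    apply le_trans (Polynomial.natDegree_add_le _ _)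
    apply max_le (le_trans (Polynomial.natDegree_C_mul_le _ _) ih)
    rcases Nat.eq_zero_or_pos (Aseq r A k).natDegree with h0 | h0
    · have hc : Aseq r A k = Polynomial.C ((Aseq r A k).coeff 0) :=
        Polynomial.eq_C_of_natDegree_eq_zero h0
      rw [hc, Polynomial.derivative_C, mul_zero]
      simp
    · apply le_trans (Polynomial.natDegree_mul_le)
      have := Polynomial.natDegree_derivative_le (Aseq r A k)
      have hX : (Polynomial.X : Polynomial ℝ).natDegree = 1 := Polynomial.natDegree_X
      omega

lemma coeff_Aseq_succ (r : ℝ) (A : Polynomial ℝ) (k m : ℕ) :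
    (Aseq r A (k+1)).coeff m = (r - (k : ℝ) + (m : ℝ)) * (Aseq r A k).coeff m := by
  show (Polynomial.C (r - (k : ℝ)) * Aseq r A k
      + Polynomial.X * Polynomial.derivative (Aseq r A k)).coeff m = _
  rw [Polynomial.coeff_add, Polynomial.coeff_C_mul]
  cases m with
  | zero =>
    rw [Polynomial.mul_coeff_zero, Polynomial.coeff_X_zero]
    push_cast; ring
  | succ m =>
    rw [Polynomial.coeff_X_mul, Polynomial.coeff_derivative]
    push_cast; ring

lemma Aseq_ne_zero (r : ℝ) (A : Polynomial ℝ) (n : ℕ) (hr : (n : ℝ) - 1 < r)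
    (hA : A ≠ 0) (k : ℕ) (hk : k ≤ n) : Aseq r A k ≠ 0 := by
  have key : ∀ k ≤ n, (Aseq r A k).coeff A.natDegree ≠ 0 := by
    intro k
    induction k with
    | zero => exact fun _ => by simpa [Aseq, Polynomial.coeff_natDegree] using
        Polynomial.leadingCoeff_ne_zero.mpr hA
    | succ k ih =>
      intro hk1
      rw [coeff_Aseq_succ]
      have h1 : (k : ℝ) ≤ (n : ℝ) - 1 := by
        have : (k:ℝ) + 1 ≤ (n:ℝ) := by exact_mod_cast hk1
        linarith
      have h2 : (0:ℝ) < r - (k : ℝ) + (A.natDegree : ℝ) := by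
        have : (0:ℝ) ≤ (A.natDegree : ℝ) := Nat.cast_nonneg _
        linarith
      exact mul_ne_zero (ne_of_gt h2) (ih (by omega))
  intro hzero
  exact key k hk (by rw [hzero]; simp)

/-- Rolle-type lemma with a possible bad point at `0`, auxiliary positive case. -/
lemma core_pos (h w K : ℝ → ℝ) (hh : Continuous h) (hK : Continuous K)
    (hw : ∀ t, t ≠ 0 → 0 < w t)
    (hd : ∀ t, t ≠ 0 → HasDerivAt h (w t * K t) t)
    {a b : ℝ} (ha0 : a < 0) (h0b : 0 < b)
    (ha : h a = 0) (hb : h b = 0)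
    (hno : ∀ c ∈ Set.Ioo a b, K c ≠ 0) (hK0 : 0 < K 0) : False := by
  have hKpos : ∀ t ∈ Set.Ioo a b, 0 < K t := by
    intro t ht
    rcases lt_trichotomy (K t) 0 with h1 | h1 | h1
    · rcases lt_trichotomy t 0 with ht0 | ht0 | ht0
      · have hsub := intermediate_value_Ioo (le_of_lt ht0)
          (hK.continuousOn (s := Set.Icc t 0))
        obtain ⟨c, hc, hc0⟩ := hsub ⟨h1, hK0⟩
        exact absurd hc0 (hno c ⟨lt_trans ht.1 hc.1, lt_trans hc.2 h0b⟩)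
      · rw [ht0] at h1; linarith
      · have hsub := intermediate_value_Ioo' (le_of_lt ht0)
          (hK.continuousOn (s := Set.Icc 0 t))
        obtain ⟨c, hc, hc0⟩ := hsub ⟨h1, hK0⟩
        exact absurd hc0 (hno c ⟨lt_trans ha0 hc.1, lt_trans hc.2 ht.2⟩)
    · exact absurd h1 (hno t ht)
    · exact h1
  have mono1 : StrictMonoOn h (Set.Icc a 0) := by
    apply strictMonoOn_of_deriv_pos (convex_Icc a 0) hh.continuousOn
    intro x hx
    rw [interior_Icc] at hx
    have hxne : x ≠ 0 := ne_of_lt hx.2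
    rw [(hd x hxne).deriv]
    exact mul_pos (hw x hxne) (hKpos x ⟨hx.1, lt_trans hx.2 h0b⟩)
  have mono2 : StrictMonoOn h (Set.Icc 0 b) := by
    apply strictMonoOn_of_deriv_pos (convex_Icc 0 b) hh.continuousOn
    intro x hx
    rw [interior_Icc] at hx
    have hxne : x ≠ 0 := ne_of_gt hx.1
    rw [(hd x hxne).deriv]
    exact mul_pos (hw x hxne) (hKpos x ⟨lt_trans ha0 hx.1, hx.2⟩)
  have l1 : h a < h 0 := mono1 ⟨le_refl a, ha0.le⟩ ⟨ha0.le, le_refl 0⟩ ha0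
  have l2 : h 0 < h b := mono2 ⟨le_refl 0, h0b.le⟩ ⟨h0b.le, le_refl b⟩ h0b
  rw [ha] at l1; rw [hb] at l2; linarith

/-- Rolle-type lemma with a possible bad point at `0`:
if `h` vanishes at `a < b`, is continuous, and has derivative `w * K` off `0`
with `w > 0` off `0` and `K` continuous, then `K` vanishes somewhere in `(a,b)`. -/
lemma core (h w K : ℝ → ℝ) (hh : Continuous h) (hK : Continuous K)
    (hw : ∀ t, t ≠ 0 → 0 < w t)
    (hd : ∀ t, t ≠ 0 → HasDerivAt h (w t * K t) t)
    {a b : ℝ} (hab : a < b) (ha : h a = 0) (hb : h b = 0) :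
    ∃ c ∈ Set.Ioo a b, K c = 0 := by
  by_contra hcon
  push_neg at hcon
  by_cases h0 : (0:ℝ) ∈ Set.Ioo a b
  · rcases lt_trichotomy (K 0) 0 with hK0 | hK0 | hK0
    · refine core_pos (fun t => -h t) w (fun t => -K t) hh.neg hK.neg hw
        (fun t ht => ?_) h0.1 h0.2 (by simp [ha]) (by simp [hb])
        (fun c hc hc2 => hcon c hc (by linarith [neg_eq_zero.mp hc2])) (neg_pos.mpr hK0)
      have := (hd t ht).neg
      exact this.congr_deriv (by simp)
    · exact hcon 0 h0 hK0
    · exact core_pos h w K hh hK hw hd h0.1 h0.2 ha hb hcon hK0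
  · obtain ⟨c, hc, hc'⟩ := exists_hasDerivAt_eq_zero hab hh.continuousOn (ha.trans hb.symm)
      (fun x hx => hd x (fun hx0 => h0 (hx0 ▸ hx)))
    have hcne : c ≠ 0 := fun hc0 => h0 (hc0 ▸ hc)
    have := hw c hcne
    refine absurd ?_ (hcon c hc)
    rcases mul_eq_zero.mp hc' with h1 | h1
    · linarith
    · exact h1

/-- If `h` vanishes on a finset `S` then `K` (as in `core`) vanishes on a finset of
cardinality at least `S.card - 1`. -/
lemma step_lemma (h w K : ℝ → ℝ) (hh : Continuous h) (hK : Continuous K)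
    (hw : ∀ t, t ≠ 0 → 0 < w t)
    (hd : ∀ t, t ≠ 0 → HasDerivAt h (w t * K t) t)
    (S : Finset ℝ) (hS : ∀ x ∈ S, h x = 0) :
    ∃ T : Finset ℝ, S.card - 1 ≤ T.card ∧ ∀ x ∈ T, K x = 0 := by
  rcases Nat.lt_or_ge S.card 1 with hc | hc
  · exact ⟨∅, by omega, by simp⟩
  obtain ⟨m, hm⟩ : ∃ m, S.card = m + 1 := ⟨S.card - 1, by omega⟩
  let e := S.orderIsoOfFin hm
  have emono : ∀ {i j : Fin (m+1)}, i < j → ((e i : ℝ) < (e j : ℝ)) := by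
    intro i j hij
    exact_mod_cast e.strictMono hij
  have emono' : ∀ {i j : Fin (m+1)}, i ≤ j → ((e i : ℝ) ≤ (e j : ℝ)) := by
    intro i j hij
    rcases eq_or_lt_of_le hij with rfl | hlt
    · exact le_refl _
    · exact (emono hlt).le
  have key : ∀ i : Fin m, ∃ c, c ∈ Set.Ioo ((e i.castSucc : ℝ)) ((e i.succ : ℝ)) ∧ K c = 0 := by
    intro i
    obtain ⟨c, hc1, hc2⟩ := core h w K hh hK hw hd
      (emono (Fin.castSucc_lt_succ : i.castSucc < i.succ))
      (hS _ (e i.castSucc).2) (hS _ (e i.succ).2)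
    exact ⟨c, hc1, hc2⟩
  choose c hc1 hc2 using key
  have cmono : StrictMono c := by
    intro i j hij
    calc c i < (e i.succ : ℝ) := (hc1 i).2
      _ ≤ (e j.castSucc : ℝ) := by
          apply emono'
          simp only [Fin.le_def, Fin.val_succ, Fin.coe_castSucc]
          exact hij
      _ < c j := (hc1 j).1
  refine ⟨Finset.image c Finset.univ, ?_, ?_⟩
  · rw [Finset.card_image_of_injective _ cmono.injective, Finset.card_univ, Fintype.card_fin]
    omega
  · intro x hx
    obtain ⟨i, _, rfl⟩ := Finset.mem_image.mp hx
    exact hc2 i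

/-- The main analytic lemma: for `n` odd, `r > n-1`, `A ≠ 0` of degree `≤ n-1`,
`B` of degree `≤ n-1`, the function `sign(t)|t|^r A(t) + B(t)` cannot have `2n`
distinct real zeros. -/
lemma no_zeros (n : ℕ) (hn : Odd n) (r : ℝ) (hr : (n : ℝ) - 1 < r)
    (A B : Polynomial ℝ) (hA : A ≠ 0) (hdA : A.natDegree ≤ n - 1) (hdB : B.natDegree ≤ n - 1)
    (S : Finset ℝ) (hcard : 2 * n ≤ S.card)
    (hzero : ∀ x ∈ S, hfun r A B 0 x = 0) : False := by
  have hn1 : 1 ≤ n := hn.pos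
  have hkr : ∀ k : ℕ, k ≤ n - 1 → 0 < r - (k : ℝ) := by
    intro k hk
    have h1 : (k : ℝ) ≤ (n : ℝ) - 1 := by
      have h2 : ((k : ℕ) : ℝ) ≤ ((n - 1 : ℕ) : ℝ) := Nat.cast_le.mpr hk
      rwa [Nat.cast_sub hn1, Nat.cast_one] at h2
    linarith
  have chain : ∀ k, k ≤ n - 1 →
      ∃ T : Finset ℝ, 2 * n - k ≤ T.card ∧ ∀ x ∈ T, hfun r A B k x = 0 := by
    intro k
    induction k with
    | zero => exact fun _ => ⟨S, by omega, hzero⟩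
    | succ k ih =>
      intro hk1
      obtain ⟨T, hT1, hT2⟩ := ih (by omega)
      obtain ⟨U, hU1, hU2⟩ := step_lemma (hfun r A B k) (fun _ => (1:ℝ))
        (hfun r A B (k+1))
        (continuous_hfun r A B k (hkr k (by omega)))
        (continuous_hfun r A B (k+1) (hkr (k+1) hk1))
        (fun _ _ => one_pos)
        (fun t ht => by simpa using hasDerivAt_hfun r A B k ht)
        T hT2
      exact ⟨U, by omega, hU2⟩
  obtain ⟨T, hT1, hT2⟩ := chain (n-1) (le_refl _)
  have hBn : (⇑Polynomial.derivative)^[n] B = 0 :=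
    Polynomial.iterate_derivative_eq_zero (by omega)
  have hEn : ¬ Even n := Nat.not_even_iff_odd.mpr hn
  have hfin : ∀ t : ℝ, t ≠ 0 → HasDerivAt (hfun r A B (n-1))
      (|t| ^ (r - (n : ℝ)) * (Aseq r A n).eval t) t := by
    intro t ht
    have hd := hasDerivAt_hfun r A B (n-1) ht
    have hn' : n - 1 + 1 = n := by omega
    rw [hn'] at hd
    have : hfun r A B n t = |t| ^ (r - (n : ℝ)) * (Aseq r A n).eval t := by
      simp [hfun, hEn, hBn]
    rwa [this] at hd
  obtain ⟨U, hU1, hU2⟩ := step_lemma (hfun r A B (n-1)) (fun t => |t| ^ (r - (n : ℝ)))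
    (fun t => (Aseq r A n).eval t)
    (continuous_hfun r A B (n-1) (hkr (n-1) (le_refl _)))
    ((Aseq r A n).continuous)
    (fun t ht => Real.rpow_pos_of_pos (abs_pos.mpr ht) _)
    hfin T hT2
  have hPA : Aseq r A n ≠ 0 := Aseq_ne_zero r A n hr hA n (le_refl _)
  have hsub : U ⊆ (Aseq r A n).roots.toFinset := by
    intro x hx
    rw [Multiset.mem_toFinset, Polynomial.mem_roots hPA]
    exact hU2 x hx
  have h1 : U.card ≤ (Aseq r A n).roots.toFinset.card := Finset.card_le_card hsub
  have h2 : (Aseq r A n).roots.toFinset.card ≤ Multiset.card (Aseq r A n).roots :=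
    Multiset.toFinset_card_le _
  have h3 := Polynomial.card_roots' (Aseq r A n)
  have h4 := natDegree_Aseq_le r A n
  omega

lemma matrix_nonsing {n : ℕ} (hn : Odd n)
    (p q : Fin n → ℝ) (hppos : ∀ i, 0 < p i) (hqpos : ∀ i, 0 < q i)
    (hpinj : Function.Injective p) (hqinj : Function.Injective q)
    (r : ℝ) (hr : (n : ℝ) - 1 < r) :
    (Matrix.of fun i j : Fin n => (p i ^ r + q j ^ r) / (p i + q j)).det ≠ 0 := by
  intro hdet
  obtain ⟨v, hv0, hv⟩ := Matrix.exists_mulVec_eq_zero_iff.mpr hdet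
  have hn1 : 1 ≤ n := hn.pos
  set A : Polynomial ℝ := ∑ j, Polynomial.C (v j) *
    ∏ k ∈ Finset.univ.erase j, (Polynomial.X + Polynomial.C (q k)) with hAdef
  set B : Polynomial ℝ := ∑ j, Polynomial.C (v j * q j ^ r) *
    ∏ k ∈ Finset.univ.erase j, (Polynomial.X + Polynomial.C (q k)) with hBdef
  have evalA : ∀ s : ℝ, A.eval s = ∑ j, v j * ∏ k ∈ Finset.univ.erase j, (s + q k) := by
    intro s
    simp [hAdef, Polynomial.eval_finset_sum, Polynomial.eval_prod]
  have evalB : ∀ s : ℝ, B.eval s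
      = ∑ j, v j * q j ^ r * ∏ k ∈ Finset.univ.erase j, (s + q k) := by
    intro s
    simp [hBdef, Polynomial.eval_finset_sum, Polynomial.eval_prod]
  have hdeg : ∀ (c : Fin n → ℝ),
      (∑ j, Polynomial.C (c j) *
        ∏ k ∈ Finset.univ.erase j, (Polynomial.X + Polynomial.C (q k))).natDegree ≤ n - 1 := by
    intro c
    apply Polynomial.natDegree_sum_le_of_forall_le
    intro j _
    apply le_trans (Polynomial.natDegree_C_mul_le _ _)
    apply le_trans (Polynomial.natDegree_prod_le _ _)
    have : ∀ k ∈ Finset.univ.erase j, (Polynomial.X + Polynomial.C (q k)).natDegree ≤ 1 :=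
      fun k _ => le_of_eq (Polynomial.natDegree_X_add_C _)
    refine le_trans (Finset.sum_le_card_nsmul _ _ 1 this) ?_
    rw [Finset.card_erase_of_mem (Finset.mem_univ j), smul_eq_mul, mul_one]
    simp
  have hAeval : ∀ j, A.eval (-(q j)) = v j * ∏ k ∈ Finset.univ.erase j, (-(q j) + q k) := by
    intro j
    rw [evalA]
    apply Finset.sum_eq_single j
    · intro m _ hmj
      have hjm : j ∈ Finset.univ.erase m :=
        Finset.mem_erase.mpr ⟨fun h => hmj h.symm, Finset.mem_univ j⟩
      rw [Finset.prod_eq_zero hjm (by ring), mul_zero]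
    · intro h; exact absurd (Finset.mem_univ j) h
  have hBeval : ∀ j, B.eval (-(q j))
      = v j * q j ^ r * ∏ k ∈ Finset.univ.erase j, (-(q j) + q k) := by
    intro j
    rw [evalB]
    apply Finset.sum_eq_single j
    · intro m _ hmj
      have hjm : j ∈ Finset.univ.erase m :=
        Finset.mem_erase.mpr ⟨fun h => hmj h.symm, Finset.mem_univ j⟩
      rw [Finset.prod_eq_zero hjm (by ring), mul_zero]
    · intro h; exact absurd (Finset.mem_univ j) h
  have hprodne : ∀ j, ∏ k ∈ Finset.univ.erase j, (-(q j) + q k) ≠ 0 := by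
    intro j
    apply Finset.prod_ne_zero_iff.mpr
    intro k hk
    have hkj : k ≠ j := (Finset.mem_erase.mp hk).1
    have : q k ≠ q j := fun h => hkj (hqinj h)
    intro h0
    apply this
    linarith [h0]
  have hAne : A ≠ 0 := by
    obtain ⟨j, hj⟩ := Function.ne_iff.mp hv0
    intro h0
    have := hAeval j
    rw [h0] at this
    simp only [Polynomial.eval_zero] at this
    exact (mul_ne_zero hj (hprodne j)) this.symm
  set S : Finset ℝ := (Finset.univ.image p) ∪ (Finset.univ.image fun j => -(q j)) with hSdef
  have hcard : 2 * n ≤ S.card := by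
    have hd : Disjoint (Finset.univ.image p) (Finset.univ.image fun j => -(q j)) := by
      rw [Finset.disjoint_left]
      intro x hx hx'
      obtain ⟨i, _, rfl⟩ := Finset.mem_image.mp hx
      obtain ⟨j, _, hj⟩ := Finset.mem_image.mp hx'
      have := hppos i
      have := hqpos j
      linarith
    rw [hSdef, Finset.card_union_of_disjoint hd,
      Finset.card_image_of_injective _ hpinj,
      Finset.card_image_of_injective _ (fun a b hab => hqinj (by linarith [hab] : q a = q b))]
    simp [Nat.two_mul]
  have hzero : ∀ x ∈ S, hfun r A B 0 x = 0 := by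
    intro x hx
    have hform : hfun r A B 0 x = sgnp x * |x| ^ r * A.eval x + B.eval x := by
      simp [hfun, Aseq]
    rw [hform]
    rcases Finset.mem_union.mp hx with hx1 | hx1
    · obtain ⟨i, _, rfl⟩ := Finset.mem_image.mp hx1
      have hpi := hppos i
      have hsg : sgnp (p i) = 1 := by unfold sgnp; rw [if_neg (not_lt.mpr hpi.le)]
      rw [hsg, one_mul, abs_of_pos hpi]
      have hrow : ∑ j, (p i ^ r + q j ^ r) / (p i + q j) * v j = 0 := by
        have h1 := congrFun hv i
        simpa [Matrix.mulVec, dotProduct] using h1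
      have hne : ∀ j, p i + q j ≠ 0 := fun j => by
        have := hqpos j; positivity
      rw [evalA, evalB, Finset.mul_sum, ← Finset.sum_add_distrib]
      have hterm : ∀ j ∈ Finset.univ, p i ^ r * (v j * ∏ k ∈ Finset.univ.erase j, (p i + q k))
          + v j * q j ^ r * ∏ k ∈ Finset.univ.erase j, (p i + q k)
          = (p i ^ r + q j ^ r) / (p i + q j) * v j * ∏ k, (p i + q k) := by
        intro j _
        rw [← Finset.mul_prod_erase Finset.univ (fun k => p i + q k) (Finset.mem_univ j)]
        rw [div_mul_eq_mul_div, div_mul_eq_mul_div, eq_div_iff (hne j)]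
        ring
      rw [Finset.sum_congr rfl hterm, ← Finset.sum_mul, hrow, zero_mul]
    · obtain ⟨j, _, rfl⟩ := Finset.mem_image.mp hx1
      have hqj := hqpos j
      have hsg : sgnp (-(q j)) = -1 := by unfold sgnp; rw [if_pos (by linarith)]
      rw [hsg, abs_neg, abs_of_pos hqj, hAeval j, hBeval j]
      ring
  exact no_zeros n hn r hr A B hAne (hdeg v) (hdeg fun j => v j * q j ^ r) S hcard hzero

/-- for `n` odd, `p` and `q` two `n`-tuples of distinct positive reals,
and `r > n - 1`, the matrix `[(pᵢʳ + qⱼʳ)/(pᵢ + qⱼ)]` is nonsingular; in particular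
the Kwong matrix `Kᵣ(p)` is nonsingular. -/
theorem kwong_type_matrix_nonsingular {n : ℕ} (hn : Odd n)
    (p q : Fin n → ℝ) (hppos : ∀ i, 0 < p i) (hqpos : ∀ i, 0 < q i)
    (hpinj : Function.Injective p) (hqinj : Function.Injective q)
    (r : ℝ) (hr : (n : ℝ) - 1 < r) :
    (Matrix.of fun i j : Fin n => (p i ^ r + q j ^ r) / (p i + q j)).det ≠ 0 ∧
    (kwong p r).det ≠ 0 := by
  refine ⟨matrix_nonsing hn p q hppos hqpos hpinj hqinj r hr, ?_⟩
  exact matrix_nonsing hn p p hppos hppos hpinj hpinj r hr
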